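/- Let x, y : ℤ → ℂ be signals with support {0,…,N-1} whose coefficient polynomials are P(z) = x[N-1]∏_{j=1}^{N-1}(z - β_j) and Q(z) = y[N-1]∏_{j=1}^{N-1}(z - γ_j), where for each j, γ_j ∈ {β_j, 1/conj(β_j)}, and |y[N-1]|² ∏_j |γ_j| = |x[N-1]|² ∏_j |β_j|. Then |ŷ(ω)| = |x̂(ω)| for all ω ∈ ℝ. -/

import Mathlib

open Polynomial

-- finsum reduction
lemma aux_finsum (N : ℕ) (x : ℤ → ℂ) (f : ℤ → ℂ)
    (hxsupp : ∀ n : ℤ, n < 0 ∨ (N : ℤ) ≤ n → x n = 0) :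
    ∑ᶠ n : ℤ, x n * f n = ∑ k ∈ Finset.range N, x k * f k := by
  rw [finsum_eq_finset_sum_of_support_subset _
    (s := Finset.map ⟨(Nat.cast : ℕ → ℤ), fun a b h => by exact_mod_cast h⟩ (Finset.range N))]
  · rw [Finset.sum_map]; rfl
  · intro n hn
    simp only [Function.mem_support, ne_eq] at hn
    have h1 : ¬ (n < 0 ∨ (N : ℤ) ≤ n) := fun h => hn (by simp [hxsupp n h])
    push_neg at h1
    simp only [Finset.coe_map, Set.mem_image, Finset.mem_coe, Finset.mem_range,
      Function.Embedding.coeFn_mk]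
    exact ⟨n.toNat, by omega, by show ((n.toNat : ℕ) : ℤ) = n; omega⟩

-- key pointwise lemma
lemma aux_key (β γ e : ℂ) (hβ : β ≠ 0) (he : ‖e‖ = 1)
    (h : γ = β ∨ γ = ((starRingEnd ℂ) β)⁻¹) :
    ‖e - γ‖ ^ 2 = ‖γ‖ / ‖β‖ * ‖e - β‖ ^ 2 := by
  have hβa : ‖β‖ ≠ 0 := by simpa using hβ
  rcases h with h | h
  · subst h; rw [div_self hβa, one_mul]
  · subst h
    have hcβ : (starRingEnd ℂ) β ≠ 0 := by simpa using hβ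
    have hee : (starRingEnd ℂ) e * e = 1 := by
      rw [mul_comm, Complex.mul_conj]
      norm_cast
      rw [Complex.normSq_eq_norm_sq, he, one_pow]
    have hq : e - ((starRingEnd ℂ) β)⁻¹ = (e * (starRingEnd ℂ) β - 1) / (starRingEnd ℂ) β := by
      field_simp
    have h2 : ‖e * (starRingEnd ℂ) β - 1‖ = ‖e - β‖ := by
      have h3 : (starRingEnd ℂ) e * (e * (starRingEnd ℂ) β - 1) = (starRingEnd ℂ) (β - e) := by
        rw [map_sub, mul_sub, mul_one, ← mul_assoc, hee, one_mul]
      have := congrArg norm h3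
      rw [norm_mul, Complex.norm_conj, Complex.norm_conj, he, one_mul] at this
      rw [this, norm_sub_rev]
    rw [hq, norm_div, h2, Complex.norm_conj, norm_inv, Complex.norm_conj, div_pow,
      show (‖β‖)⁻¹ / ‖β‖ = ((‖β‖) ^ 2)⁻¹ by
        rw [sq]; field_simp]
    ring

lemma aux_eval (N : ℕ) (x : ℤ → ℂ) (β : ℕ → ℂ)
    (hxfact : (∑ n ∈ Finset.range N, C (x n) * X ^ n) =
      C (x ((N : ℤ) - 1)) * ∏ j ∈ Finset.range (N - 1), (X - C (β j)))
    (ω : ℝ) :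
    ∑ k ∈ Finset.range N, x k * Complex.exp (-Complex.I * ω * ((k : ℤ) : ℂ)) =
      x ((N : ℤ) - 1) * ∏ j ∈ Finset.range (N - 1),
        (Complex.exp (-Complex.I * ω) - β j) := by
  have := congrArg (Polynomial.eval (Complex.exp (-Complex.I * ω))) hxfact
  simp only [eval_finset_sum, eval_mul, eval_pow, eval_C, eval_X, eval_prod, eval_sub] at this
  rw [← this]
  refine Finset.sum_congr rfl fun k _ => ?_
  rw [← Complex.exp_nat_mul]
  push_cast
  ring_nf

lemma aux_zero (N : ℕ) (hN : 1 ≤ N) (x : ℤ → ℂ) (β : ℕ → ℂ)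
    (hxfact : (∑ n ∈ Finset.range N, C (x n) * X ^ n) =
      C (x ((N : ℤ) - 1)) * ∏ j ∈ Finset.range (N - 1), (X - C (β j))) :
    x 0 = x ((N : ℤ) - 1) * ∏ j ∈ Finset.range (N - 1), (0 - β j) := by
  have := congrArg (Polynomial.eval (0 : ℂ)) hxfact
  simp only [eval_finset_sum, eval_mul, eval_pow, eval_C, eval_X, eval_prod, eval_sub] at this
  rw [← this]
  rw [Finset.sum_eq_single_of_mem 0 (Finset.mem_range.2 (by omega))]
  · norm_num
  · intro b _ hb
    simp [zero_pow hb]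

set_option maxHeartbeats 1000000 in
open Polynomial in
theorem stmt15 (N : ℕ) (hN : 1 ≤ N) (x y : ℤ → ℂ)
    (hx0 : x 0 ≠ 0) (hxN : x ((N : ℤ) - 1) ≠ 0)
    (hxsupp : ∀ n : ℤ, n < 0 ∨ (N : ℤ) ≤ n → x n = 0)
    (hy0 : y 0 ≠ 0) (hyN : y ((N : ℤ) - 1) ≠ 0)
    (hysupp : ∀ n : ℤ, n < 0 ∨ (N : ℤ) ≤ n → y n = 0)
    (β γ : ℕ → ℂ)
    (hxfact : (∑ n ∈ Finset.range N, C (x n) * X ^ n) =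
      C (x ((N : ℤ) - 1)) * ∏ j ∈ Finset.range (N - 1), (X - C (β j)))
    (hyfact : (∑ n ∈ Finset.range N, C (y n) * X ^ n) =
      C (y ((N : ℤ) - 1)) * ∏ j ∈ Finset.range (N - 1), (X - C (γ j)))
    (hchoice : ∀ j ∈ Finset.range (N - 1),
      γ j = β j ∨ γ j = ((starRingEnd ℂ) (β j))⁻¹)
    (hnorm : ‖y ((N : ℤ) - 1)‖ ^ 2 *
        ∏ j ∈ Finset.range (N - 1), ‖γ j‖ =
      ‖x ((N : ℤ) - 1)‖ ^ 2 *
        ∏ j ∈ Finset.range (N - 1), ‖β j‖)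
    (ω : ℝ) :
    ‖∑ᶠ n : ℤ, y n * Complex.exp (-Complex.I * ω * n)‖ =
      ‖∑ᶠ n : ℤ, x n * Complex.exp (-Complex.I * ω * n)‖ := by
  -- β j ≠ 0
  have hβne : ∀ j ∈ Finset.range (N - 1), β j ≠ 0 := by
    intro j hj hj0
    apply hx0
    rw [aux_zero N hN x β hxfact]
    rw [Finset.prod_eq_zero hj (by simp [hj0])]
    ring
  set e : ℂ := Complex.exp (-Complex.I * ω) with he_def
  have he : ‖e‖ = 1 := by
    rw [he_def, Complex.norm_exp]
    norm_num
  -- reduce both sides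
  rw [aux_finsum N y (fun n => Complex.exp (-Complex.I * ω * n)) hysupp,
    aux_finsum N x (fun n => Complex.exp (-Complex.I * ω * n)) hxsupp,
    aux_eval N y γ hyfact ω, aux_eval N x β hxfact ω, norm_mul, norm_mul,
    norm_prod, norm_prod]
  -- positivity facts
  have hBpos : (0:ℝ) < ∏ j ∈ Finset.range (N - 1), ‖β j‖ := by
    apply Finset.prod_pos
    intro j hj
    exact norm_pos_iff.mpr (hβne j hj)
  have hA : (0:ℝ) ≤ ‖y ((N : ℤ) - 1)‖ * ∏ j ∈ Finset.range (N - 1),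
      ‖e - γ j‖ :=
    mul_nonneg (norm_nonneg _) (Finset.prod_nonneg fun j _ => norm_nonneg _)
  have hB : (0:ℝ) ≤ ‖x ((N : ℤ) - 1)‖ * ∏ j ∈ Finset.range (N - 1),
      ‖e - β j‖ :=
    mul_nonneg (norm_nonneg _) (Finset.prod_nonneg fun j _ => norm_nonneg _)
  have hsq : (‖y ((N : ℤ) - 1)‖ * ∏ j ∈ Finset.range (N - 1),
      ‖e - γ j‖) ^ 2 = (‖x ((N : ℤ) - 1)‖ * ∏ j ∈ Finset.range (N - 1),
      ‖e - β j‖) ^ 2 := by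
    rw [mul_pow, mul_pow, ← Finset.prod_pow, ← Finset.prod_pow]
    have hprod : ∏ j ∈ Finset.range (N - 1), ‖e - γ j‖ ^ 2 =
        ∏ j ∈ Finset.range (N - 1),
          (‖γ j‖ / ‖β j‖ * ‖e - β j‖ ^ 2) :=
      Finset.prod_congr rfl fun j hj =>
        aux_key (β j) (γ j) e (hβne j hj) he (hchoice j hj)
    rw [hprod, Finset.prod_mul_distrib, Finset.prod_div_distrib, ← mul_assoc]
    congr 1
    rw [← mul_div_assoc, div_eq_iff (ne_of_gt hBpos)]
    exact hnorm
  exact (sq_eq_sq₀ hA hB).mp hsq
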